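/- For any integer n ≥ 2, Σ_{k=1}^{n−1} 1/(1 − cos(2πk/n)) = (n² − 1)/6. -/

import Mathlib

open Finset Real

private lemma auxA (z : ℂ) (n : ℕ) :
    (∑ j ∈ range n, (j : ℂ) * z ^ j) * (z - 1)
      = ((n : ℂ) - 1) * z ^ n - ∑ j ∈ range n, z ^ j + 1 := by
  induction n with
  | zero => simp
  | succ m ih =>
    rw [sum_range_succ, sum_range_succ (fun j => z ^ j), add_mul, ih]
    push_cast
    ring

private lemma auxB (z : ℂ) (n : ℕ) :
    (∑ j ∈ range n, (j : ℂ) ^ 2 * z ^ j) * (z - 1)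
      = ((n : ℂ) - 1) ^ 2 * z ^ n + (∑ j ∈ range n, z ^ j) - 1
        - 2 * ∑ j ∈ range n, (j : ℂ) * z ^ j := by
  induction n with
  | zero => simp
  | succ m ih =>
    rw [sum_range_succ, sum_range_succ (fun j => z ^ j),
      sum_range_succ (fun j => (j : ℂ) * z ^ j), add_mul, ih]
    push_cast
    ring

private lemma geomZero (n : ℕ) (z : ℂ) (hz : z ^ n = 1) (h1 : z ≠ 1) :
    (∑ j ∈ range n, z ^ j) = 0 := by
  have hz1 : z - 1 ≠ 0 := sub_ne_zero.mpr h1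
  have h := geom_sum_mul z n
  rw [hz, sub_self] at h
  exact (mul_eq_zero.mp h).resolve_right hz1

private lemma keyC (n : ℕ) (z : ℂ) (hz : z ^ n = 1) (h1 : z ≠ 1) :
    (∑ j ∈ range n, ((j * (n - j) : ℕ) : ℂ) * z ^ j) * (z - 1) ^ 2 = 2 * n * z := by
  have hG := geomZero n z hz h1
  have hA : (∑ j ∈ range n, (j : ℂ) * z ^ j) * (z - 1) = n := by
    rw [auxA, hz, hG]; ring
  have hB : (∑ j ∈ range n, (j : ℂ) ^ 2 * z ^ j) * (z - 1)
      = ((n : ℂ) - 1) ^ 2 - 1 - 2 * ∑ j ∈ range n, (j : ℂ) * z ^ j := by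
    rw [auxB, hz, hG]; ring
  have hS : (∑ j ∈ range n, ((j * (n - j) : ℕ) : ℂ) * z ^ j)
      = (n : ℂ) * (∑ j ∈ range n, (j : ℂ) * z ^ j)
        - ∑ j ∈ range n, (j : ℂ) ^ 2 * z ^ j := by
    rw [mul_sum, ← sum_sub_distrib]
    refine sum_congr rfl fun j hj => ?_
    have hjn : j ≤ n := (mem_range.mp hj).le
    push_cast [Nat.cast_sub hjn]
    ring
  rw [hS]
  linear_combination ((n : ℂ) * (z - 1) + 2) * hA - (z - 1) * hB

private lemma unitProps (n k : ℕ) (hk1 : 1 ≤ k) (hkn : k < n) :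
    (Complex.exp ((2 * π * k / n : ℝ) * Complex.I)) ^ n = 1 ∧
      Complex.exp ((2 * π * k / n : ℝ) * Complex.I) ≠ 1 ∧
      Real.cos (2 * π * k / n) ≠ 1 := by
  have hn0 : (0 : ℝ) < n := by
    have : 0 < n := lt_of_le_of_lt (Nat.zero_le k) hkn
    exact_mod_cast this
  set θ : ℝ := 2 * π * k / n with hθdef
  have hθpos : 0 < θ := by
    apply div_pos _ hn0
    have : (0 : ℝ) < k := by exact_mod_cast hk1
    positivity
  have hθlt : θ < 2 * π := by
    rw [hθdef, div_lt_iff₀ hn0]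
    have hk : (k : ℝ) < n := by exact_mod_cast hkn
    nlinarith [Real.pi_pos]
  have hcos : Real.cos θ ≠ 1 := by
    intro h
    have := (Real.cos_eq_one_iff_of_lt_of_lt (by linarith) hθlt).mp h
    linarith
  refine ⟨?_, ?_, hcos⟩
  · rw [← Complex.exp_nat_mul]
    have harg : (n : ℂ) * ((θ : ℝ) * Complex.I) = (k : ℤ) * (2 * ↑π * Complex.I) := by
      have h1 : (n : ℝ) * θ = k * (2 * π) := by
        rw [hθdef]; field_simp
      push_cast
      calc (n : ℂ) * ((θ : ℝ) * Complex.I) = ((n : ℝ) * θ : ℝ) * Complex.I := by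
            push_cast; ring
        _ = ((k : ℝ) * (2 * π) : ℝ) * Complex.I := by rw [h1]
        _ = (k : ℂ) * (2 * (π : ℂ) * Complex.I) := by push_cast; ring
    rw [harg, Complex.exp_int_mul_two_pi_mul_I]
  · intro h
    apply hcos
    have := Complex.exp_ofReal_mul_I_re θ
    rw [h] at this
    simpa using this.symm

private lemma perk (n k : ℕ) (hk1 : 1 ≤ k) (hkn : k < n) :
    (1 : ℝ) / (1 - Real.cos (2 * π * k / n))
      = -(1 / n) * ∑ j ∈ range n, ((j * (n - j) : ℕ) : ℝ)
          * Real.cos (2 * π * (k * j) / n) := by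
  have hn0 : (0 : ℝ) < n := by
    have : 0 < n := lt_of_le_of_lt (Nat.zero_le k) hkn
    exact_mod_cast this
  obtain ⟨hzn, hz1, hcos⟩ := unitProps n k hk1 hkn
  set θ : ℝ := 2 * π * k / n with hθdef
  set z : ℂ := Complex.exp ((θ : ℝ) * Complex.I) with hzdef
  have hkey := keyC n z hzn hz1
  set w : ℂ := Complex.exp ((-θ : ℝ) * Complex.I) with hwdef
  have hzw : z * w = 1 := by
    rw [hzdef, hwdef, ← Complex.exp_add]
    rw [show ((θ : ℝ) : ℂ) * Complex.I + ((-θ : ℝ) : ℂ) * Complex.I = 0 by push_cast; ring]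
    exact Complex.exp_zero
  have hzwc : z + w = 2 * ((Real.cos θ : ℝ) : ℂ) := by
    rw [hzdef, hwdef, Complex.ofReal_cos, Complex.cos]
    push_cast
    ring
  have hsq : (z - 1) ^ 2 = ((2 * ((Real.cos θ : ℝ) : ℂ) - 2)) * z := by
    rw [show (2 * ((Real.cos θ : ℝ) : ℂ) - 2) * z = (z + w - 2) * z by rw [hzwc]]
    linear_combination -hzw
  rw [hsq] at hkey
  have hz0 : z ≠ 0 := Complex.exp_ne_zero _
  have hkey2 : (∑ j ∈ range n, ((j * (n - j) : ℕ) : ℂ) * z ^ j) *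
      (2 * ((Real.cos θ : ℝ) : ℂ) - 2) = 2 * n := by
    have h := hkey
    rw [show (∑ j ∈ range n, ((j * (n - j) : ℕ) : ℂ) * z ^ j) *
        ((2 * ((Real.cos θ : ℝ) : ℂ) - 2) * z)
      = ((∑ j ∈ range n, ((j * (n - j) : ℕ) : ℂ) * z ^ j) *
        (2 * ((Real.cos θ : ℝ) : ℂ) - 2)) * z by ring, show (2 : ℂ) * n * z = (2 * n) * z by ring] at h
    exact mul_right_cancel₀ hz0 h
  have hc1 : ((Real.cos θ : ℝ) : ℂ) - 1 ≠ 0 := by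
    rw [sub_ne_zero]
    exact_mod_cast hcos
  have hS : (∑ j ∈ range n, ((j * (n - j) : ℕ) : ℂ) * z ^ j)
      = (((n : ℝ) / (Real.cos θ - 1) : ℝ) : ℂ) := by
    rw [show ((((n : ℝ) / (Real.cos θ - 1) : ℝ)) : ℂ)
        = (n : ℂ) / (((Real.cos θ : ℝ) : ℂ) - 1) by push_cast; ring,
      eq_div_iff hc1]
    linear_combination hkey2 / 2
  have hreS : (∑ j ∈ range n, ((j * (n - j) : ℕ) : ℂ) * z ^ j).re
      = ∑ j ∈ range n, ((j * (n - j) : ℕ) : ℝ) * Real.cos (2 * π * (k * j) / n) := by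
    rw [Complex.re_sum]
    refine sum_congr rfl fun j hj => ?_
    have hzj : z ^ j = Complex.exp (((θ * j : ℝ)) * Complex.I) := by
      rw [hzdef, ← Complex.exp_nat_mul]
      push_cast
      ring_nf
    rw [hzj]
    have harg : θ * j = 2 * π * (k * j) / n := by
      rw [hθdef]; push_cast; ring
    rw [show (((j * (n - j) : ℕ) : ℂ)) = (((j * (n - j) : ℕ) : ℝ) : ℂ) by push_cast; ring,
      Complex.re_ofReal_mul, Complex.exp_ofReal_mul_I_re, harg]
  have hfin : ∑ j ∈ range n, ((j * (n - j) : ℕ) : ℝ) * Real.cos (2 * π * (k * j) / n)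
      = (n : ℝ) / (Real.cos θ - 1) := by
    rw [← hreS, hS, Complex.ofReal_re]
  rw [hfin]
  have hc1' : Real.cos θ - 1 ≠ 0 := sub_ne_zero.mpr hcos
  have hc1'' : 1 - Real.cos θ ≠ 0 := fun h => hc1' (by linarith [sub_eq_zero.mp h])
  field_simp
  ring

private lemma innersum (n j : ℕ) (hj1 : 1 ≤ j) (hjn : j < n) :
    ∑ k ∈ range n, Real.cos (2 * π * (k * j) / n) = 0 := by
  obtain ⟨hzn, hz1, _⟩ := unitProps n j hj1 hjn
  set w : ℂ := Complex.exp ((2 * π * j / n : ℝ) * Complex.I) with hwdef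
  have hG := geomZero n w hzn hz1
  have : (∑ k ∈ range n, w ^ k).re = ∑ k ∈ range n, Real.cos (2 * π * (k * j) / n) := by
    rw [Complex.re_sum]
    refine sum_congr rfl fun k _ => ?_
    have hwk : w ^ k = Complex.exp (((2 * π * j / n * k : ℝ)) * Complex.I) := by
      rw [hwdef, ← Complex.exp_nat_mul]
      push_cast
      ring_nf
    rw [hwk, Complex.exp_ofReal_mul_I_re]
    congr 1
    push_cast
    ring
  rw [← this, hG, Complex.zero_re]

private lemma sumId (n : ℕ) : ∑ j ∈ range n, (j : ℝ) = n * (n - 1) / 2 := by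
  induction n with
  | zero => simp
  | succ m ih => rw [sum_range_succ, ih]; push_cast; ring

private lemma sumSq (n : ℕ) : ∑ j ∈ range n, (j : ℝ) ^ 2 = n * (n - 1) * (2 * n - 1) / 6 := by
  induction n with
  | zero => simp
  | succ m ih => rw [sum_range_succ, ih]; push_cast; ring

theorem stmt_7 (n : ℕ) (hn : 2 ≤ n) :
    ∑ k ∈ Finset.Ico 1 n, (1 : ℝ) / (1 - Real.cos (2 * Real.pi * k / n)) =
      ((n : ℝ) ^ 2 - 1) / 6 := by
  have hn0 : (0 : ℝ) < n := by positivity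
  have hn0' : (n : ℝ) ≠ 0 := ne_of_gt hn0
  have step1 : ∑ k ∈ Finset.Ico 1 n, (1 : ℝ) / (1 - Real.cos (2 * π * k / n))
      = ∑ k ∈ Finset.Ico 1 n, -(1 / (n : ℝ)) * ∑ j ∈ range n,
          ((j * (n - j) : ℕ) : ℝ) * Real.cos (2 * π * (k * j) / n) := by
    refine sum_congr rfl fun k hk => ?_
    obtain ⟨hk1, hkn⟩ := Finset.mem_Ico.mp hk
    exact perk n k hk1 hkn
  rw [step1, ← Finset.mul_sum, Finset.sum_comm]
  have step2 : ∀ j ∈ range n,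
      ∑ k ∈ Finset.Ico 1 n, ((j * (n - j) : ℕ) : ℝ) * Real.cos (2 * π * (k * j) / n)
        = -((j * (n - j) : ℕ) : ℝ) := by
    intro j hj
    rcases Nat.eq_zero_or_pos j with hj0 | hj1
    · subst hj0; simp
    · have hjn := mem_range.mp hj
      rw [← Finset.mul_sum]
      have hico : ∑ k ∈ Finset.Ico 1 n, Real.cos (2 * π * (k * j) / n) = -1 := by
        have hrange := innersum n j hj1 hjn
        rw [Finset.range_eq_Ico,
          Finset.sum_eq_sum_Ico_succ_bot (lt_of_lt_of_le (by norm_num) hn)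
            (fun k => Real.cos (2 * π * (k * j) / n))] at hrange
        simp only [Nat.cast_zero, zero_mul, Nat.cast_ofNat, mul_zero, zero_div,
          Real.cos_zero] at hrange
        linarith
      rw [hico]
      ring
  rw [Finset.sum_congr rfl step2, Finset.sum_neg_distrib]
  have hsum : ∑ j ∈ range n, ((j * (n - j) : ℕ) : ℝ)
      = (n : ℝ) * ((n : ℝ) * ((n : ℝ) - 1) / 2) - (n : ℝ) * ((n : ℝ) - 1) * (2 * (n : ℝ) - 1) / 6 := by
    rw [show (n : ℝ) * ((n : ℝ) * ((n : ℝ) - 1) / 2) = (n : ℝ) * ∑ j ∈ range n, (j : ℝ) by rw [sumId],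
      show (n : ℝ) * ((n : ℝ) - 1) * (2 * (n : ℝ) - 1) / 6 = ∑ j ∈ range n, (j : ℝ) ^ 2 by rw [sumSq],
      Finset.mul_sum, ← Finset.sum_sub_distrib]
    refine sum_congr rfl fun j hj => ?_
    have hjn : j ≤ n := (mem_range.mp hj).le
    push_cast [Nat.cast_sub hjn]
    ring
  rw [hsum]
  field_simp
  ring
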